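/- Assume the periodic perforations, the perturbed perforations, Assumption (A2) and the boundary-measure bound as described in the context, and let w^per : ℝ^d → ℝ be Lipschitz, ℤ^d-periodic and equal to 0 on closure(𝒪^per). Then there exists a Lipschitz function φ : ℝ^d → ℝ such that φ = −w^per on ⋃_{k∈ℤ^d} closure(𝒪_k) and ∫_{ℝ^d} (φ² + ‖∇φ‖²) < ∞, where ∇φ denotes the almost-everywhere defined derivative of the Lipschitz function φ. -/

import Mathlib

open MeasureTheory Metric Set Filter Topology Asymptotics RealInnerProductSpace Pointwise

noncomputable section

abbrev Euc (d : ℕ) := EuclideanSpace ℝ (Fin d)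

def unitCube (d : ℕ) : Set (Euc d) := {x | ∀ i, x i ∈ Set.Ioo (0:ℝ) 1}

def closedUnitCube (d : ℕ) : Set (Euc d) := {x | ∀ i, x i ∈ Set.Icc (0:ℝ) 1}

def box {d : ℕ} (a b : Fin d → ℝ) : Set (Euc d) := {x | ∀ i, x i ∈ Set.Icc (a i) (b i)}

def cell (d : ℕ) (k : Fin d → ℤ) : Set (Euc d) := {x | ∀ i, x i - (k i : ℝ) ∈ Set.Ioo (0:ℝ) 1}

def perHole {d : ℕ} (Oper : Set (Euc d)) (k : Fin d → ℤ) : Set (Euc d) :=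
  {x | (WithLp.toLp 2 (fun i => x i - (k i : ℝ)) : Euc d) ∈ Oper}

def perHoles {d : ℕ} (Oper : Set (Euc d)) : Set (Euc d) := ⋃ k : Fin d → ℤ, perHole Oper k

def holes {d : ℕ} (O : (Fin d → ℤ) → Set (Euc d)) : Set (Euc d) := ⋃ k, O k

def perPlus {d : ℕ} (Oper : Set (Euc d)) (k : Fin d → ℤ) (a : ℝ) : Set (Euc d) :=
  {x | Metric.infDist x (perHole Oper k) < a}

def perMinus {d : ℕ} (Oper : Set (Euc d)) (k : Fin d → ℤ) (a : ℝ) : Set (Euc d) :=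
  {x ∈ perHole Oper k | a < Metric.infDist x (frontier (perHole Oper k))}

def lap {d : ℕ} (w : Euc d → ℝ) (x : Euc d) : ℝ :=
  ∑ i, fderiv ℝ (fun y => fderiv ℝ w y (EuclideanSpace.single i 1)) x (EuclideanSpace.single i 1)

/- ### Auxiliary lemmas -/

def vec {d : ℕ} (k : Fin d → ℤ) : Euc d := WithLp.toLp 2 (fun i => (k i : ℝ))

lemma le_infDist' {d : ℕ} {s : Set (Euc d)} (hs : s.Nonempty) {x : Euc d} {c : ℝ}
    (h : ∀ y ∈ s, c ≤ dist x y) : c ≤ infDist x s := by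
  by_contra hc
  obtain ⟨y, hy, hlt⟩ := (infDist_lt_iff hs).1 (lt_of_not_ge hc)
  exact absurd (h y hy) (not_le.2 hlt)

lemma norm_le_sqrt_of_unit {d : ℕ} (v : Euc d) (hv : ∀ i, v i ∈ Set.Ioo (0:ℝ) 1) :
    ‖v‖ ≤ Real.sqrt d := by
  rw [EuclideanSpace.norm_eq]
  apply Real.sqrt_le_sqrt
  calc ∑ i, ‖v i‖^2 ≤ ∑ _i : Fin d, 1 := by
        apply Finset.sum_le_sum
        intro i _
        have h1 := (hv i).1
        have h2 := (hv i).2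
        rw [Real.norm_eq_abs, sq_abs]
        nlinarith
    _ = d := by simp

lemma perHole_eq_preimage {d : ℕ} (Oper : Set (Euc d)) (k : Fin d → ℤ) :
    perHole Oper k = (fun x : Euc d => x - vec k) ⁻¹' Oper := rfl

lemma infDist_preimage_sub {d : ℕ} (s : Set (Euc d)) (c : Euc d) (x : Euc d) :
    infDist x ((fun y : Euc d => y - c) ⁻¹' s) = infDist (x - c) s := by
  have himg : (fun y : Euc d => y - c) ⁻¹' s = (fun y : Euc d => y + c) '' s := by
    ext z
    constructor
    · intro h; exact ⟨z - c, h, by module⟩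
    · rintro ⟨w, hw, rfl⟩; simpa [Set.mem_preimage] using hw
  rw [himg]
  have hiso : Isometry (fun y : Euc d => y + c) := Isometry.of_dist_eq (fun a b => by
    simp [dist_add_right])
  have h2 := infDist_image (x := x - c) (t := s) hiso
  simpa using h2

lemma volume_preimage_sub {d : ℕ} (s : Set (Euc d)) (c : Euc d) :
    volume ((fun y : Euc d => y - c) ⁻¹' s) = volume s := by
  have h : (fun y : Euc d => y - c) = (fun y : Euc d => y + (-c)) := by funext y; abel_nf
  rw [h]
  exact measure_preimage_add_right volume (-c) s

lemma frontier_perHole {d : ℕ} (Oper : Set (Euc d)) (k : Fin d → ℤ) :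
    frontier (perHole Oper k) = (fun x : Euc d => x - vec k) ⁻¹' frontier Oper := by
  rw [perHole_eq_preimage]
  exact (Homeomorph.preimage_frontier (Homeomorph.subRight (vec k)) Oper).symm

lemma volume_collar_eq {d : ℕ} (Oper : Set (Euc d)) (k : Fin d → ℤ) (a : ℝ) :
    volume {x : Euc d | infDist x (frontier (perHole Oper k)) < a}
      = volume {x : Euc d | infDist x (frontier Oper) < a} := by
  have h1 : {x : Euc d | infDist x (frontier (perHole Oper k)) < a}
      = (fun x : Euc d => x - vec k) ⁻¹' {x : Euc d | infDist x (frontier Oper) < a} := by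
    ext x
    simp only [Set.mem_setOf_eq, Set.mem_preimage, frontier_perHole, infDist_preimage_sub]
  rw [h1, volume_preimage_sub]

lemma infDist_frontier_le {d : ℕ} {S : Set (Euc d)} (hS : S.Nonempty) {x : Euc d}
    (hx : x ∉ S) : infDist x (frontier S) ≤ infDist x S := by
  have hxs : x ∈ Sᶜ := hx
  have hne : Sᶜ ≠ Set.univ := by
    intro h
    obtain ⟨y, hy⟩ := hS
    exact (h ▸ Set.mem_univ y : y ∈ Sᶜ) hy
  obtain ⟨y, hy, hdy⟩ := exists_mem_frontier_infDist_compl_eq_dist hxs hne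
  rw [compl_compl] at hdy
  rw [frontier_compl] at hy
  calc infDist x (frontier S) ≤ dist x y := infDist_le_dist_of_mem hy
    _ = infDist x S := hdy.symm

lemma finite_large {ι : Type*} (α : ι → ℝ) (h : Summable α) (c : ℝ) (hc : 0 < c) :
    {k | c ≤ α k}.Finite := by
  have h2 : ∀ᶠ k in cofinite, α k < c :=
    h.tendsto_cofinite_zero.eventually_lt_const hc
  rw [Filter.eventually_cofinite] at h2
  exact h2.subset (fun k hk => not_lt.2 hk)

lemma finite_lattice {d : ℕ} (x : Euc d) (R : ℝ) : {k : Fin d → ℤ | ‖vec k - x‖ ≤ R}.Finite := by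
  have hsub : {k : Fin d → ℤ | ‖vec k - x‖ ≤ R} ⊆
      Set.pi Set.univ (fun i => {n : ℤ | (n:ℝ) ∈ Set.Icc (x i - R) (x i + R)}) := by
    intro k hk i _
    have h1 : |(vec k - x) i| ≤ R := by
      calc |(vec k - x) i| ≤ ‖vec k - x‖ := by
            rw [EuclideanSpace.norm_eq, ← Real.sqrt_sq_eq_abs]
            apply Real.sqrt_le_sqrt
            have := Finset.single_le_sum (f := fun j => ‖(vec k - x) j‖^2)
              (fun j _ => by positivity) (Finset.mem_univ i)
            simpa [Real.norm_eq_abs, sq_abs] using this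
        _ ≤ R := hk
    have h0 : (vec k - x) i = (k i : ℝ) - x i := by simp [vec]
    rw [h0, abs_le] at h1
    exact ⟨by linarith [h1.1], by linarith [h1.2]⟩
  apply Set.Finite.subset _ hsub
  apply Set.Finite.pi
  intro i
  exact (Set.finite_Icc ⌈x i - R⌉ ⌊x i + R⌋).subset
    (fun n hn => ⟨Int.ceil_le.2 hn.1, Int.le_floor.2 hn.2⟩)

/-- non-emptiness of the minimization space `V` (Lemma 5.8 of the paper):
there is a finite-energy Lipschitz extension of the boundary datum `-w^per`. -/
theorem minimization_space_nonempty (d : ℕ) (hd : 2 ≤ d)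
    (Oper : Set (Euc d)) (hOperOpen : IsOpen Oper) (hOperNe : Oper.Nonempty)
    (hOperQ : closure Oper ⊆ unitCube d)
    (O : (Fin d → ℤ) → Set (Euc d)) (hOopen : ∀ k, IsOpen (O k))
    (hONe : ∀ k, (O k).Nonempty) (hOcell : ∀ k, closure (O k) ⊆ cell d k)
    (α : (Fin d → ℤ) → ℝ) (hαpos : ∀ k, 0 ≤ α k) (hαsum : Summable α)
    (hA2 : ∀ k, perMinus Oper k (α k) ⊆ O k ∧ O k ⊆ perPlus Oper k (α k))
    (Cb ab : ℝ) (hCb : 0 < Cb) (hab : 0 < ab)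
    (hFederer : ∀ a : ℝ, 0 < a → a < ab →
      volume {x : Euc d | Metric.infDist x (frontier Oper) < a} ≤ ENNReal.ofReal (Cb * a))
    (wper : Euc d → ℝ) (L : NNReal) (hwperlip : LipschitzWith L wper)
    (hwperiodic : ∀ (x : Euc d) (k : Fin d → ℤ),
      wper (x + (WithLp.toLp 2 (fun i => (k i : ℝ)) : Euc d)) = wper x)
    (hwperzero : ∀ x ∈ closure (perHoles Oper), wper x = 0) :
    ∃ φ : Euc d → ℝ, (∃ Lφ : NNReal, LipschitzWith Lφ φ) ∧
      (∀ x ∈ ⋃ k, closure (O k), φ x = - wper x) ∧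
      ∫⁻ x, ENNReal.ofReal ((φ x) ^ 2 + ‖gradient φ x‖ ^ 2) < ⊤ := by
  classical
  -- basic constants
  set Mn : NNReal := L + 1 with hMn
  set M : ℝ := (Mn : ℝ) with hMdef
  have hM1 : (1:ℝ) ≤ M := by
    simp [hMdef, hMn]
  have hMpos : (0:ℝ) < M := lt_of_lt_of_le one_pos hM1
  have hw : LipschitzWith Mn wper := hwperlip.weaken le_self_add
  set A : ℝ := ∑' k, α k with hAdef
  have hαA : ∀ k, α k ≤ A := fun k => hαsum.le_tsum k (fun j _ => hαpos j)
  have hA0 : (0:ℝ) ≤ A := tsum_nonneg (fun k => hαpos k)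
  -- distance to the periodic holes
  set dk : (Fin d → ℤ) → Euc d → ℝ := fun k x => infDist x (perHole Oper k) with hdk
  have hne : ∀ k, (perHole Oper k).Nonempty := by
    intro k
    obtain ⟨y, hy⟩ := hOperNe
    refine ⟨y + vec k, ?_⟩
    have : (WithLp.toLp 2 (fun i => (y + vec k) i - (k i : ℝ)) : Euc d) = y := by
      ext i
      simp [vec]
    show (WithLp.toLp 2 (fun i => (y + vec k) i - (k i : ℝ)) : Euc d) ∈ Oper
    rw [this]
    exact hy
  have hdk_nonneg : ∀ k x, 0 ≤ dk k x := fun k x => infDist_nonneg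
  have hdk_lip : ∀ k x y, dk k y ≤ dk k x + dist x y := by
    intro k x y
    calc dk k y ≤ dk k x + dist y x := infDist_le_infDist_add_dist
      _ = dk k x + dist x y := by rw [dist_comm]
  -- the auxiliary barrier function
  set hfun : (Fin d → ℤ) → Euc d → ℝ := fun k x => max 0 (2*M*α k - M * dk k x) with hhfun
  set h : Euc d → ℝ := fun x => ⨆ k, hfun k x with hhdef
  have hfun_nonneg : ∀ k x, 0 ≤ hfun k x := fun k x => le_max_left _ _
  have hfun_le : ∀ k x, hfun k x ≤ 2*M*A := by
    intro k x
    apply max_le (by positivity)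
    have := hdk_nonneg k x
    have := hαA k
    nlinarith
  have hbdd : ∀ x, BddAbove (Set.range fun k => hfun k x) := by
    intro x
    refine ⟨2*M*A, ?_⟩
    rintro _ ⟨k, rfl⟩
    exact hfun_le k x
  have hh_nonneg : ∀ x, 0 ≤ h x := fun x => Real.iSup_nonneg (fun k => hfun_nonneg k x)
  have hh_le : ∀ x, h x ≤ 2*M*A := fun x => ciSup_le (fun k => hfun_le k x)
  have hfun_le_h : ∀ k x, hfun k x ≤ h x := fun k x => le_ciSup (hbdd x) k
  -- h is M-Lipschitz
  have hh_lip_aux : ∀ x y : Euc d, h x ≤ h y + M * dist x y := by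
    intro x y
    apply ciSup_le
    intro k
    have h1 : hfun k x ≤ hfun k y + M * dist x y := by
      apply max_le
      · have := hfun_nonneg k y
        have : (0:ℝ) ≤ M * dist x y := by positivity
        linarith [hfun_nonneg k y]
      · have h2 := hdk_lip k x y
        have h3 : 2*M*α k - M * dk k x ≤ (2*M*α k - M * dk k y) + M * dist x y := by
          nlinarith [hdk_lip k y x, dist_comm x y ▸ (hdk_lip k y x)]
        calc 2*M*α k - M * dk k x ≤ (2*M*α k - M * dk k y) + M * dist x y := h3
          _ ≤ max 0 (2*M*α k - M * dk k y) + M * dist x y := by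
              have := le_max_right (0:ℝ) (2*M*α k - M * dk k y)
              linarith
    exact h1.trans (by linarith [hfun_le_h k y])
  have hLh : LipschitzWith Mn h := by
    apply LipschitzWith.of_dist_le_mul
    intro x y
    rw [Real.dist_eq, abs_le]
    constructor
    · have := hh_lip_aux y x
      rw [dist_comm y x] at this
      simp only [hMdef] at *
      linarith
    · have := hh_lip_aux x y
      linarith
  -- the extension
  set φ : Euc d → ℝ := fun x => min (h x) (max (-(h x)) (-(wper x))) with hφdef
  have hφlip : LipschitzWith Mn φ := by
    have h1 := hLh.min (hLh.neg.max hw.neg)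
    simpa using h1
  -- |wper| is controlled by the distance to each periodic hole
  have hwb : ∀ (x : Euc d) (k : Fin d → ℤ), |wper x| ≤ M * dk k x := by
    intro x k
    have h1 : |wper x| / M ≤ dk k x := by
      apply le_infDist' (hne k)
      intro y hy
      have hy0 : wper y = 0 := hwperzero y (subset_closure (Set.mem_iUnion.2 ⟨k, hy⟩))
      have h2 := hw.dist_le_mul x y
      rw [Real.dist_eq, hy0, sub_zero] at h2
      rw [div_le_iff₀ hMpos]
      calc |wper x| ≤ (Mn:ℝ) * dist x y := h2
        _ = dist x y * M := by rw [hMdef]; ring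
    calc |wper x| = (|wper x| / M) * M := by field_simp
      _ ≤ dk k x * M := by nlinarith
      _ = M * dk k x := by ring
  -- bounds on φ
  have hφ_le : ∀ x, φ x ≤ h x := fun x => min_le_left _ _
  have hφ_ge : ∀ x, -(h x) ≤ φ x := by
    intro x
    apply le_min
    · linarith [hh_nonneg x]
    · exact le_max_left _ _
  have hφ_abs : ∀ x, |φ x| ≤ h x := fun x => abs_le.2 ⟨hφ_ge x, hφ_le x⟩
  -- boundary condition
  have hboundary : ∀ x ∈ ⋃ k, closure (O k), φ x = - wper x := by
    intro x hx
    obtain ⟨k, hk⟩ := Set.mem_iUnion.1 hx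
    have hdkx : dk k x ≤ α k := by
      have hcl : closure (O k) ⊆ {y : Euc d | dk k y ≤ α k} := by
        apply closure_minimal
        · intro y hy
          exact le_of_lt (show infDist y (perHole Oper k) < α k from (hA2 k).2 hy)
        · exact isClosed_le (continuous_infDist_pt _) continuous_const
      exact hcl hk
    have habs : |wper x| ≤ M * α k := by
      calc |wper x| ≤ M * dk k x := hwb x k
        _ ≤ M * α k := by nlinarith
    have hhx : M * α k ≤ h x := by
      have h1 : M * α k ≤ hfun k x := by
        apply le_max_of_le_right
        nlinarith
      exact h1.trans (hfun_le_h k x)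
    have h1 : -(wper x) ≤ h x := by
      have := neg_le_abs (wper x)
      linarith
    have h2 : -(h x) ≤ -(wper x) := by
      have := le_abs_self (wper x)
      linarith
    show min (h x) (max (-(h x)) (-(wper x))) = - wper x
    rw [max_eq_right h2, min_eq_right h1]
  -- φ vanishes on the periodic holes
  have hperopen : IsOpen (perHoles Oper) := by
    apply isOpen_iUnion
    intro k
    rw [perHole_eq_preimage]
    exact hOperOpen.preimage (continuous_id.sub continuous_const)
  have hφ0per : ∀ y ∈ perHoles Oper, φ y = 0 := by
    intro y hy
    have hw0 : wper y = 0 := hwperzero y (subset_closure hy)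
    show min (h y) (max (-(h y)) (-(wper y))) = 0
    rw [hw0, neg_zero, max_eq_right (neg_nonpos.2 (hh_nonneg y)), min_eq_right (hh_nonneg y)]
  -- the exceptional set
  set E : Set (Euc d) := ⋃ k, {x : Euc d | dk k x ≤ 2 * α k} with hEdef
  -- away from E, φ vanishes locally
  have hloc : ∀ x : Euc d, x ∉ E → ∀ᶠ y in 𝓝 x, φ y = 0 := by
    intro x hxE
    have hgt : ∀ k, 2 * α k < dk k x := by
      intro k
      by_contra hcon
      exact hxE (Set.mem_iUnion.2 ⟨k, not_lt.1 hcon⟩)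
    -- the nearby indices form a finite set
    have hKfin : {k : Fin d → ℤ | dk k x < 2 * α k + 1}.Finite := by
      apply (finite_lattice x (Real.sqrt d + (2*A + 1))).subset
      intro k hk
      have hk' : dk k x < 2 * A + 1 := by
        have := hαA k
        have := hk
        simp only [Set.mem_setOf_eq] at this
        linarith
      obtain ⟨p, hp, hdp⟩ := (infDist_lt_iff (hne k)).1 hk'
      have hpv : ‖p - vec k‖ ≤ Real.sqrt d := by
        apply norm_le_sqrt_of_unit
        intro i
        have hmem : (WithLp.toLp 2 (fun i => p i - (k i : ℝ)) : Euc d) ∈ Oper := hp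
        have hsub : (WithLp.toLp 2 (fun i => p i - (k i : ℝ)) : Euc d) ∈ unitCube d :=
          hOperQ (subset_closure hmem)
        have : (p - vec k) i = p i - (k i : ℝ) := by simp [vec]
        rw [this]
        exact hsub i
      show ‖vec k - x‖ ≤ Real.sqrt d + (2*A + 1)
      calc ‖vec k - x‖ ≤ ‖vec k - p‖ + ‖p - x‖ := norm_sub_le_norm_sub_add_norm_sub _ _ _
        _ ≤ Real.sqrt d + (2*A + 1) := by
            have h1 : ‖vec k - p‖ = ‖p - vec k‖ := norm_sub_rev _ _
            have h2 : ‖p - x‖ = dist x p := by rw [dist_comm, dist_eq_norm]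
            rw [h1, h2]
            linarith
    -- choose a radius
    set F : Finset (Fin d → ℤ) := insert (fun _ => 0) hKfin.toFinset with hFdef
    have hFne : F.Nonempty := ⟨fun _ => 0, Finset.mem_insert_self _ _⟩
    set r : ℝ := min 1 (F.inf' hFne (fun k => dk k x - 2 * α k)) with hrdef
    have hr0 : 0 < r := by
      apply lt_min one_pos
      rw [Finset.lt_inf'_iff]
      intro k _
      linarith [hgt k]
    have hr1 : r ≤ 1 := min_le_left _ _
    have hrF : ∀ k ∈ F, r ≤ dk k x - 2 * α k := by
      intro k hk
      exact (min_le_right _ _).trans (Finset.inf'_le _ hk)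
    -- on the ball of radius r, h vanishes
    have hball : ∀ y ∈ Metric.ball x r, φ y = 0 := by
      intro y hy
      have hdist : dist x y < r := by
        rw [dist_comm]
        exact hy
      have hzero : ∀ k, hfun k y = 0 := by
        intro k
        have hdky : 2 * α k ≤ dk k y := by
          by_cases hkK : dk k x < 2 * α k + 1
          · have hkF : k ∈ F := Finset.mem_insert_of_mem (hKfin.mem_toFinset.2 hkK)
            have := hrF k hkF
            have := hdk_lip k y x
            rw [dist_comm y x] at this
            linarith
          · push_neg at hkK
            have := hdk_lip k y x
            rw [dist_comm y x] at this
            linarith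
        apply max_eq_left
        nlinarith
      have hhy : h y = 0 := by
        have : (fun k => hfun k y) = fun _ => (0:ℝ) := funext hzero
        show (⨆ k, hfun k y) = 0
        rw [this, ciSup_const]
      show min (h y) (max (-(h y)) (-(wper y))) = 0
      rw [hhy, neg_zero]
      exact min_eq_left (le_max_left _ _)
    exact Filter.eventually_of_mem (Metric.ball_mem_nhds x hr0) hball
  -- locally zero implies zero value and zero gradient
  have hloczero : ∀ x : Euc d, (∀ᶠ y in 𝓝 x, φ y = 0) → φ x = 0 ∧ gradient φ x = 0 := by
    intro x hev
    constructor
    · exact hev.self_of_nhds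
    · have heq : φ =ᶠ[𝓝 x] (fun _ => (0:ℝ)) := hev
      have hfd : fderiv ℝ φ x = fderiv ℝ (fun _ => (0:ℝ)) x := heq.fderiv_eq
      have : gradient φ x = (InnerProductSpace.toDual ℝ (Euc d)).symm (fderiv ℝ φ x) := rfl
      rw [this, hfd, fderiv_fun_const]
      simp
  -- global gradient bound
  have hgradle : ∀ x, ‖gradient φ x‖ ≤ M := by
    intro x
    have h1 : ‖gradient φ x‖ = ‖fderiv ℝ φ x‖ :=
      (InnerProductSpace.toDual ℝ (Euc d)).symm.norm_map _
    rw [h1]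
    exact norm_fderiv_le_of_lipschitz ℝ hφlip
  -- pointwise bound of the energy density
  set C : ENNReal := ENNReal.ofReal ((2*M*A)^2 + M^2) with hCdef
  have hbound : ∀ x, ENNReal.ofReal ((φ x)^2 + ‖gradient φ x‖^2)
      ≤ (E \ perHoles Oper).indicator (fun _ => C) x := by
    intro x
    by_cases hx : x ∈ E \ perHoles Oper
    · rw [Set.indicator_of_mem hx]
      apply ENNReal.ofReal_le_ofReal
      have h1 : |φ x| ≤ 2*M*A := (hφ_abs x).trans (hh_le x)
      have h2 : (φ x)^2 ≤ (2*M*A)^2 := by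
        rw [← sq_abs]
        apply pow_le_pow_left₀ (abs_nonneg _) h1
      have h3 : ‖gradient φ x‖^2 ≤ M^2 := by
        apply pow_le_pow_left₀ (norm_nonneg _) (hgradle x)
      linarith
    · rw [Set.indicator_of_notMem hx]
      have hz : φ x = 0 ∧ gradient φ x = 0 := by
        by_cases hxp : x ∈ perHoles Oper
        · apply hloczero
          exact Filter.eventually_of_mem (hperopen.mem_nhds hxp) hφ0per
        · apply hloczero
          apply hloc
          intro hxe
          exact hx ⟨hxe, hxp⟩
      rw [hz.1, hz.2]
      simp
  refine ⟨φ, ⟨Mn, hφlip⟩, hboundary, ?_⟩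
  -- norm bound for points of periodic holes relative to their lattice point
  have hpnorm : ∀ (k : Fin d → ℤ) (p : Euc d), p ∈ perHole Oper k → ‖p - vec k‖ ≤ Real.sqrt d := by
    intro k p hp
    apply norm_le_sqrt_of_unit
    intro i
    have hsub : (WithLp.toLp 2 (fun i => p i - (k i : ℝ)) : Euc d) ∈ unitCube d :=
      hOperQ (subset_closure hp)
    have hco : (p - vec k) i = p i - (k i : ℝ) := by simp [vec]
    rw [hco]
    exact hsub i
  -- per-cell exceptional sets
  set Sk : (Fin d → ℤ) → Set (Euc d) :=
    fun k => {x : Euc d | dk k x ≤ 2*α k} \ perHole Oper k with hSkdef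
  have hES : E \ perHoles Oper ⊆ ⋃ k, Sk k := by
    intro x hx
    obtain ⟨k, hk⟩ := Set.mem_iUnion.1 hx.1
    exact Set.mem_iUnion.2 ⟨k, hk, fun hp => hx.2 (Set.mem_iUnion.2 ⟨k, hp⟩)⟩
  have hSfr : ∀ k, Sk k ⊆ {x : Euc d | infDist x (frontier (perHole Oper k)) ≤ 2*α k} := by
    intro k x hx
    exact (infDist_frontier_le (hne k) hx.2).trans hx.1
  -- volume bound for good indices
  have hgood : ∀ k, 3*α k < ab → volume (Sk k) ≤ ENNReal.ofReal (Cb * (3*α k)) := by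
    intro k hk3
    rcases eq_or_lt_of_le (hαpos k) with hk0 | hk0
    · -- `α k = 0` : the set is null
      have hsub : ∀ a : ℝ, 0 < a →
          Sk k ⊆ {x : Euc d | infDist x (frontier (perHole Oper k)) < a} := by
        intro a ha x hx
        have h1 := hSfr k hx
        simp only [Set.mem_setOf_eq] at h1 ⊢
        rw [← hk0] at h1
        linarith
      have hvol0 : volume (Sk k) = 0 := by
        have hb : ∀ n : ℕ, volume (Sk k) ≤ ENNReal.ofReal (Cb * (ab / (n+2))) := by
          intro n
          have hpos : (0:ℝ) < ab / (n+2) := by positivity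
          have hlt : ab / ((n:ℝ)+2) < ab := by
            rw [div_lt_iff₀ (by positivity)]
            nlinarith
          calc volume (Sk k)
              ≤ volume {x : Euc d | infDist x (frontier (perHole Oper k)) < ab/((n:ℝ)+2)} :=
                measure_mono (hsub _ hpos)
            _ = volume {x : Euc d | infDist x (frontier Oper) < ab/((n:ℝ)+2)} :=
                volume_collar_eq _ _ _
            _ ≤ ENNReal.ofReal (Cb * (ab/((n:ℝ)+2))) := hFederer _ hpos hlt
        have htendR : Filter.Tendsto (fun n : ℕ => Cb * (ab/((n:ℝ)+2))) atTop (𝓝 0) := by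
          have h1 : Filter.Tendsto (fun n : ℕ => (Cb*ab) / (n:ℝ)) atTop (𝓝 0) :=
            tendsto_const_div_atTop_nhds_zero_nat (Cb*ab)
          have h2 : Filter.Tendsto (fun n : ℕ => n + 2) atTop atTop := tendsto_add_atTop_nat 2
          have h3 := h1.comp h2
          have h4 : (fun n : ℕ => (Cb*ab) / ((n + 2 : ℕ):ℝ)) = fun n : ℕ => Cb * (ab/((n:ℝ)+2)) := by
            funext n
            push_cast
            ring
          rw [← h4]
          exact h3
        have htend : Filter.Tendsto (fun n : ℕ => ENNReal.ofReal (Cb * (ab/((n:ℝ)+2))))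
            atTop (𝓝 0) := by
          rw [show (0:ENNReal) = ENNReal.ofReal 0 by simp]
          exact ENNReal.tendsto_ofReal htendR
        exact le_antisymm (ge_of_tendsto' htend hb) zero_le
      rw [hvol0]
      exact zero_le
    · calc volume (Sk k)
          ≤ volume {x : Euc d | infDist x (frontier (perHole Oper k)) < 3*α k} := by
            apply measure_mono
            intro x hx
            have h1 := hSfr k hx
            simp only [Set.mem_setOf_eq] at h1 ⊢
            linarith
        _ = volume {x : Euc d | infDist x (frontier Oper) < 3*α k} := volume_collar_eq _ _ _
        _ ≤ ENNReal.ofReal (Cb * (3*α k)) := hFederer _ (by linarith) hk3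
  -- every exceptional set has finite volume
  have hfin : ∀ k, volume (Sk k) < ⊤ := by
    intro k
    have hsub : Sk k ⊆ Metric.closedBall (vec k) (Real.sqrt d + (2*α k + 1)) := by
      intro x hx
      have h1 : dk k x < 2*α k + 1 := lt_of_le_of_lt hx.1 (by linarith)
      obtain ⟨p, hp, hdp⟩ := (infDist_lt_iff (hne k)).1 h1
      have h2 : dist p (vec k) ≤ Real.sqrt d := by
        rw [dist_eq_norm]
        exact hpnorm k p hp
      have h3 : dist x (vec k) ≤ dist x p + dist p (vec k) := dist_triangle _ _ _
      simp only [Metric.mem_closedBall]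
      linarith
    exact lt_of_le_of_lt (measure_mono hsub) measure_closedBall_lt_top
  -- the remainder terms
  set G : (Fin d → ℤ) → ENNReal := fun k => if 3*α k < ab then 0 else volume (Sk k) with hGdef
  have hSkG : ∀ k, volume (Sk k) ≤ ENNReal.ofReal (Cb * (3*α k)) + G k := by
    intro k
    by_cases hk : 3*α k < ab
    · simp only [hGdef, if_pos hk, add_zero]
      exact hgood k hk
    · simp only [hGdef, if_neg hk]
      exact le_add_self
  have hGsum : ∑' k, G k < ⊤ := by
    have hF0 : {k | ab ≤ 3 * α k}.Finite := by
      have h1 := finite_large (fun k => 3 * α k) (hαsum.mul_left 3) ab hab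
      exact h1
    have heq : ∑' k, G k = ∑ k ∈ hF0.toFinset, G k := by
      apply tsum_eq_sum
      intro k hk
      rw [Set.Finite.mem_toFinset] at hk
      simp only [Set.mem_setOf_eq, not_le] at hk
      simp only [hGdef, if_pos hk]
    rw [heq]
    rw [ENNReal.sum_lt_top]
    intro k _
    by_cases hk : 3*α k < ab
    · simp only [hGdef, if_pos hk]
      exact ENNReal.zero_lt_top
    · simp only [hGdef, if_neg hk]
      exact hfin k
  have hsum1 : ∑' k, ENNReal.ofReal (Cb * (3*α k)) < ⊤ := by
    have hnn : ∀ k, 0 ≤ Cb * (3*α k) := by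
      intro k
      have := hαpos k
      positivity
    have hsm : Summable (fun k => Cb * (3*α k)) := by
      have h1 : (fun k => Cb * (3*α k)) = fun k => (Cb*3) * α k := by
        funext k; ring
      rw [h1]
      exact hαsum.mul_left _
    rw [← ENNReal.ofReal_tsum_of_nonneg hnn hsm]
    exact ENNReal.ofReal_lt_top
  have hvolE : volume (E \ perHoles Oper) < ⊤ := by
    calc volume (E \ perHoles Oper) ≤ volume (⋃ k, Sk k) := measure_mono hES
      _ ≤ ∑' k, volume (Sk k) := measure_iUnion_le _
      _ ≤ ∑' k, (ENNReal.ofReal (Cb * (3*α k)) + G k) := ENNReal.tsum_le_tsum hSkG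
      _ = (∑' k, ENNReal.ofReal (Cb * (3*α k))) + ∑' k, G k := ENNReal.tsum_add
      _ < ⊤ := ENNReal.add_lt_top.2 ⟨hsum1, hGsum⟩
  calc ∫⁻ x, ENNReal.ofReal ((φ x)^2 + ‖gradient φ x‖^2)
      ≤ ∫⁻ x, (E \ perHoles Oper).indicator (fun _ => C) x := lintegral_mono hbound
    _ ≤ C * volume (E \ perHoles Oper) := lintegral_indicator_const_le _ _
    _ < ⊤ := ENNReal.mul_lt_top ENNReal.ofReal_lt_top hvolE
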